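/- Let R be a commutative ring and S a multiplicatively closed subset of R. If N is a Noetherian R-module, M an R-module, and h : N → M an injective R-linear map, then S^{-1}h : S^{-1}N → S^{-1}M is injective. Consequently, inj^F_R(M, N) ≤ inj^{F_p}_{R_p}(M_p, N_p) and cog^{F_p}_{R_p}(N_p, M_p) ≤ cog^F_R(N, M) for every prime p and every R-submodule F of Hom_R(N, M). -/

import Mathlib

open IsLocalizedModule

section Aux

variable {R : Type*} [CommRing R] (S : Submonoid R)
variable {M N : Type*} [AddCommGroup M] [Module R M] [AddCommGroup N] [Module R N]

local notation "gN" => LocalizedModule.mkLinearMap S N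
local notation "gM" => LocalizedModule.mkLinearMap S M

lemma mk'_sum {M' : Type*} [AddCommMonoid M'] [Module R M'] (f : M →ₗ[R] M')
    [IsLocalizedModule S f] {ι : Type*} (t : Finset ι) (m : ι → M) (s : S) :
    mk' f (∑ i ∈ t, m i) s = ∑ i ∈ t, mk' f (m i) s := by
  classical
  induction t using Finset.induction with
  | empty => simp
  | insert _ _ h ih => rw [Finset.sum_insert h, Finset.sum_insert h, mk'_add, ih]

lemma common_denom {t : ℕ} (n : Fin t → LocalizedModule S N) :
    ∃ (x : Fin t → N) (s : S), ∀ i, n i = mk' gN (x i) s := by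
  classical
  choose p hp using fun i => IsLocalizedModule.mk'_surjective S gN (n i)
  refine ⟨fun i => ((Finset.univ.erase i).prod (fun j => (p j).2)) • (p i).1,
    ∏ i, (p i).2, fun i => ?_⟩
  rw [← hp i, show (∏ j, (p j).2) = (Finset.univ.erase i).prod (fun j => (p j).2) * (p i).2
    from (Finset.prod_erase_mul _ _ (Finset.mem_univ i)).symm, mk'_cancel_left]
  rfl

lemma injA {t : ℕ} (f : Fin t → (N →ₗ[R] M))
    (hinj : Function.Injective fun n : Fin t → N => ∑ i, f i (n i)) :
    Function.Injective fun n : Fin t → LocalizedModule S N =>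
      ∑ i, IsLocalizedModule.map S gN gM (f i) (n i) := by
  intro a b hab
  have hd : ∑ i, IsLocalizedModule.map S gN gM (f i) (a i - b i) = 0 := by
    simp only [map_sub, Finset.sum_sub_distrib]
    rw [sub_eq_zero]; exact hab
  obtain ⟨x, s, hxs⟩ := common_denom S (fun i => a i - b i)
  simp only [hxs, map_mk'] at hd
  rw [← mk'_sum] at hd
  obtain ⟨u, hu⟩ := (mk'_eq_zero' _ _).mp hd
  have h2 : ∑ i, f i ((u : R) • x i) = 0 := by
    simp only [map_smul, ← Finset.smul_sum]
    rw [← Submonoid.smul_def]; exact hu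
  have h3 : (fun i => (u : R) • x i) = (0 : Fin t → N) := by
    apply hinj
    simpa using h2
  have h4 : ∀ i, a i - b i = 0 := by
    intro i
    rw [hxs i]
    exact (mk'_eq_zero' _ _).mpr ⟨u, by rw [Submonoid.smul_def, congrFun h3 i, Pi.zero_apply]⟩
  funext i
  exact sub_eq_zero.mp (h4 i)

lemma injB {t : ℕ} (f : Fin t → (N →ₗ[R] M))
    (hinj : Function.Injective fun n : N => fun i : Fin t => f i n) :
    Function.Injective fun n : LocalizedModule S N =>
      fun i : Fin t => IsLocalizedModule.map S gN gM (f i) n := by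
  intro a b hab
  rw [← sub_eq_zero]
  obtain ⟨⟨x, s⟩, hx⟩ := IsLocalizedModule.mk'_surjective S gN (a - b)
  have hd : ∀ i, IsLocalizedModule.map S gN gM (f i) (a - b) = 0 := by
    intro i
    rw [map_sub, sub_eq_zero]
    exact congrFun hab i
  have hz : ∀ i, mk' gM (f i x) s = 0 := by
    intro i
    rw [← IsLocalizedModule.map_mk' S gN gM (f i) x s, show mk' gN x s = a - b from hx]
    exact hd i
  choose u hu using fun i => (mk'_eq_zero' (LocalizedModule.mkLinearMap S M) s).mp (hz i)
  have h2 : (fun i => f i ((∏ j, (u j : R)) • x)) = (fun i => f i (0 : N)) := by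
    funext i
    have : (∏ j, (u j : R)) = (∏ j ∈ Finset.univ.erase i, (u j : R)) * (u i : R) :=
      (Finset.prod_erase_mul _ _ (Finset.mem_univ i)).symm
    rw [this, map_zero, map_smul, mul_smul, show ((u i : R) • f i x = 0) from by
      rw [← Submonoid.smul_def]; exact hu i, smul_zero]
  have h3 : (∏ j, (u j : R)) • x = 0 := hinj h2
  rw [← hx]
  exact (mk'_eq_zero' _ _).mpr ⟨∏ j, u j, by rw [Submonoid.smul_def]; push_cast; exact h3⟩

end Aux


/-- The injective capacity of `M` with respect to `N` over `R` restricted to `F`. -/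
noncomputable def injCap {R M N : Type*} [CommRing R]
    [AddCommGroup M] [Module R M] [AddCommGroup N] [Module R N]
    (F : Submodule R (N →ₗ[R] M)) : ℕ∞ :=
  sSup {c : ℕ∞ | ∃ t : ℕ, c = t ∧ ∃ f : Fin t → (N →ₗ[R] M),
    (∀ i, f i ∈ F) ∧ Function.Injective fun n : Fin t → N => ∑ i, f i (n i)}

/-- The number of cogenerators of `N` with respect to `M` over `R` restricted to `F`. -/
noncomputable def cogNum {R M N : Type*} [CommRing R]
    [AddCommGroup M] [Module R M] [AddCommGroup N] [Module R N]
    (F : Submodule R (N →ₗ[R] M)) : ℕ∞ :=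
  sInf {c : ℕ∞ | ∃ t : ℕ, c = t ∧ ∃ f : Fin t → (N →ₗ[R] M),
    (∀ i, f i ∈ F) ∧ Function.Injective fun n : N => fun i : Fin t => f i n}

open LocalizedModule in
/-- The localization of a submodule `F ≤ Hom_R(N, M)`. -/
noncomputable def locHomSubmodule {R M N : Type*} [CommRing R]
    [AddCommGroup M] [Module R M] [AddCommGroup N] [Module R N]
    (S : Submonoid R) (F : Submodule R (N →ₗ[R] M)) :
    Submodule (Localization S)
      (LocalizedModule S N →ₗ[Localization S] LocalizedModule S M) :=
  Submodule.span (Localization S)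
    ((fun f : N →ₗ[R] M =>
        (IsLocalizedModule.map S (mkLinearMap S N) (mkLinearMap S M)
          f).extendScalarsOfIsLocalization S (Localization S)) '' F)

theorem stmt_19 {R M N : Type*} [CommRing R]
    [AddCommGroup M] [Module R M] [AddCommGroup N] [Module R N]
    [IsNoetherian R N] :
    (∀ (S : Submonoid R) (h : N →ₗ[R] M), Function.Injective h →
      Function.Injective
        (IsLocalizedModule.map S (LocalizedModule.mkLinearMap S N)
          (LocalizedModule.mkLinearMap S M) h)) ∧
    (∀ (F : Submodule R (N →ₗ[R] M)) (p : Ideal R) [p.IsPrime],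
      injCap F ≤ injCap (locHomSubmodule p.primeCompl F) ∧
      cogNum (locHomSubmodule p.primeCompl F) ≤ cogNum F) := by
  classical
  refine ⟨fun S h hinj => IsLocalizedModule.map_injective S _ _ h hinj, fun F p _ => ?_⟩
  set S := p.primeCompl
  constructor
  · apply sSup_le_sSup
    rintro c ⟨t, rfl, f, hF, hinj⟩
    refine ⟨t, rfl, fun i => (IsLocalizedModule.map S (LocalizedModule.mkLinearMap S N)
      (LocalizedModule.mkLinearMap S M) (f i)).extendScalarsOfIsLocalization S (Localization S),
      fun i => Submodule.subset_span ⟨f i, hF i, rfl⟩, ?_⟩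
    exact injA S f hinj
  · apply sInf_le_sInf
    rintro c ⟨t, rfl, f, hF, hinj⟩
    refine ⟨t, rfl, fun i => (IsLocalizedModule.map S (LocalizedModule.mkLinearMap S N)
      (LocalizedModule.mkLinearMap S M) (f i)).extendScalarsOfIsLocalization S (Localization S),
      fun i => Submodule.subset_span ⟨f i, hF i, rfl⟩, ?_⟩
    exact injB S f hinj
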